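/- Let p ≥ 2 and let aᵢ, bᵢ ∈ ℂ^{nᵢ} be nonzero vectors for 1 ≤ i ≤ p. The sum a₁ ⊗ ⋯ ⊗ a_p + b₁ ⊗ ⋯ ⊗ b_p is an elementary tensor (possibly zero) if and only if aᵢ is parallel to bᵢ for all indices i with at most one exception. -/

import Mathlib

noncomputable section

/-- The elementary tensor `a₁ ⊗ ⋯ ⊗ a_p` in `ℂ^{n₁} ⊗ ⋯ ⊗ ℂ^{n_p}`. -/
def tensP {p : ℕ} {n : Fin p → ℕ} (a : ∀ i, EuclideanSpace ℂ (Fin (n i))) :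
    EuclideanSpace ℂ (∀ i, Fin (n i)) :=
  WithLp.toLp 2 fun f => ∏ i, a i (f i)

lemma aux_ne {m : ℕ} (v : EuclideanSpace ℂ (Fin m)) (hv : v ≠ 0) : ∃ x, v x ≠ 0 := by
  by_contra h
  push_neg at h
  exact hv (by ext x; exact h x)

lemma aux_prod_upd {p : ℕ} {n : Fin p → ℕ} (a : ∀ i, EuclideanSpace ℂ (Fin (n i)))
    (s : Finset (Fin p)) (f : ∀ i, Fin (n i)) (k : Fin p) (hk : k ∈ s) (y : Fin (n k)) :
    ∏ i ∈ s, a i (Function.update f k y i) = a k y * ∏ i ∈ s.erase k, a i (f i) := by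
  rw [← Finset.mul_prod_erase _ _ hk]
  congr 1
  · rw [Function.update_self]
  · exact Finset.prod_congr rfl fun i hi => by rw [Function.update_of_ne (Finset.ne_of_mem_erase hi)]

lemma aux_det {m : ℕ} (u w : EuclideanSpace ℂ (Fin m)) (hu : u ≠ 0)
    (hw : ∀ c : ℂ, w ≠ c • u) : ∃ y1 y2, u y1 * w y2 - u y2 * w y1 ≠ 0 := by
  by_contra h
  push_neg at h
  obtain ⟨y0, hy0⟩ := aux_ne u hu
  apply hw (w y0 / u y0)
  ext y
  have h1 := h y0 y
  simp only [PiLp.smul_apply, smul_eq_mul]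
  field_simp
  linear_combination h1

/-- For `p ≥ 2` and nonzero vectors `aᵢ, bᵢ`, the sum `a₁ ⊗ ⋯ ⊗ a_p + b₁ ⊗ ⋯ ⊗ b_p`
is an elementary tensor (possibly zero) iff `aᵢ ∥ bᵢ` for all indices `i`
with at most one exception. -/
theorem stmt5 {p : ℕ} (hp : 2 ≤ p) {n : Fin p → ℕ}
    (a b : ∀ i, EuclideanSpace ℂ (Fin (n i)))
    (ha : ∀ i, a i ≠ 0) (hb : ∀ i, b i ≠ 0) :
    (∃ v : ∀ i, EuclideanSpace ℂ (Fin (n i)), tensP a + tensP b = tensP v) ↔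
    (∃ j : Fin p, ∀ i ≠ j, ∃ c : ℂ, b i = c • a i) := by
  classical
  constructor
  · rintro ⟨v, hv⟩
    by_contra hcon
    push_neg at hcon
    -- get two distinct non-parallel indices k, j
    obtain ⟨k, _, hk⟩ := hcon ⟨0, by omega⟩
    obtain ⟨j, hjk, hj⟩ := hcon k
    -- determinant at slot k
    obtain ⟨y1, y2, hd⟩ := aux_det (a k) (b k) (ha k) (fun c hc => hk c hc)
    set d : ℂ := a k y1 * b k y2 - a k y2 * b k y1 with hd_def
    -- shorthand products
    set Pa : (∀ i, Fin (n i)) → ℂ := fun f => ∏ i ∈ Finset.univ.erase k, a i (f i) with hPa_def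
    set Pb : (∀ i, Fin (n i)) → ℂ := fun f => ∏ i ∈ Finset.univ.erase k, b i (f i) with hPb_def
    set Pv : (∀ i, Fin (n i)) → ℂ := fun f => ∏ i ∈ Finset.univ.erase k, v i (f i) with hPv_def
    have key : ∀ (f : ∀ i, Fin (n i)) (y : Fin (n k)),
        a k y * Pa f + b k y * Pb f = v k y * Pv f := by
      intro f y
      have h0 := congrFun (congrArg WithLp.ofLp hv) (Function.update f k y)
      have h1 : (tensP a + tensP b) (Function.update f k y)
          = tensP a (Function.update f k y) + tensP b (Function.update f k y) := rfl
      rw [h1] at h0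
      simpa only [tensP, aux_prod_upd _ Finset.univ _ k (Finset.mem_univ k) y] using h0
    set L : ℂ := b k y2 * v k y1 - b k y1 * v k y2 with hL_def
    set M : ℂ := a k y1 * v k y2 - a k y2 * v k y1 with hM_def
    have hPaL : ∀ f, d * Pa f = L * Pv f := fun f => by
      linear_combination (b k y2) * key f y1 - (b k y1) * key f y2
    have hPbM : ∀ f, d * Pb f = M * Pv f := fun f => by
      linear_combination (a k y1) * key f y2 - (a k y2) * key f y1
    have hrel : ∀ f, M * Pa f = L * Pb f := by
      intro f
      have := mul_left_cancel₀ hd (?_ : d * (M * Pa f) = d * (L * Pb f))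
      · exact this
      · calc d * (M * Pa f) = M * (d * Pa f) := by ring
          _ = M * (L * Pv f) := by rw [hPaL]
          _ = L * (d * Pb f) := by rw [hPbM]; ring
          _ = d * (L * Pb f) := by ring
    -- base points
    have hax : ∀ i, ∃ x, a i x ≠ 0 := fun i => aux_ne (a i) (ha i)
    have hbx : ∀ i, ∃ x, b i x ≠ 0 := fun i => aux_ne (b i) (hb i)
    set fa : ∀ i, Fin (n i) := fun i => (hax i).choose with hfa_def
    set fb : ∀ i, Fin (n i) := fun i => (hbx i).choose with hfb_def
    have hfa : ∀ i, a i (fa i) ≠ 0 := fun i => (hax i).choose_spec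
    have hfb : ∀ i, b i (fb i) ≠ 0 := fun i => (hbx i).choose_spec
    have hPafa : Pa fa ≠ 0 := Finset.prod_ne_zero_iff.2 fun i _ => hfa i
    have hPbfb : Pb fb ≠ 0 := Finset.prod_ne_zero_iff.2 fun i _ => hfb i
    have hM0 : M ≠ 0 := by
      intro h
      have h2 := hPbM fb
      rw [h, zero_mul] at h2
      rcases mul_eq_zero.1 h2 with h' | h'
      · exact hd h'
      · exact hPbfb h'
    have hL0 : L ≠ 0 := by
      intro h
      have h2 := hPaL fa
      rw [h, zero_mul] at h2
      rcases mul_eq_zero.1 h2 with h' | h'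
      · exact hd h'
      · exact hPafa h'
    -- slot j : j ∈ univ.erase k
    have hjmem : j ∈ Finset.univ.erase k := Finset.mem_erase.2 ⟨hjk, Finset.mem_univ j⟩
    set Ra : ℂ := ∏ i ∈ (Finset.univ.erase k).erase j, a i (fa i) with hRa_def
    set Rb : ℂ := ∏ i ∈ (Finset.univ.erase k).erase j, b i (fa i) with hRb_def
    have hRa0 : Ra ≠ 0 := Finset.prod_ne_zero_iff.2 fun i _ => hfa i
    have hslot : ∀ x : Fin (n j), M * (a j x * Ra) = L * (b j x * Rb) := by
      intro x
      have h5 := hrel (Function.update fa j x)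
      simp only [hPa_def, hPb_def] at h5
      rwa [aux_prod_upd a _ fa j hjmem x, aux_prod_upd b _ fa j hjmem x] at h5
    have hRb0 : Rb ≠ 0 := by
      intro h
      obtain ⟨x0, hx0⟩ := hax j
      have := hslot x0
      rw [h, mul_zero, mul_zero] at this
      rcases mul_eq_zero.1 this with h' | h'
      · exact hM0 h'
      · rcases mul_eq_zero.1 h' with h'' | h''
        · exact hx0 h''
        · exact hRa0 h''
    apply hj (M * Ra / (L * Rb))
    ext x
    simp only [PiLp.smul_apply, smul_eq_mul]
    rw [div_mul_eq_mul_div, eq_div_iff (mul_ne_zero hL0 hRb0)]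
    linear_combination -hslot x
  · rintro ⟨j, h⟩
    set c : ∀ i : Fin p, ℂ := fun i => if h' : i = j then 1 else (h i h').choose with hc_def
    have hc : ∀ i (h' : i ≠ j), b i = c i • a i := by
      intro i h'
      simp only [hc_def, dif_neg h']
      exact (h i h').choose_spec
    set C : ℂ := ∏ i ∈ Finset.univ.erase j, c i with hC_def
    refine ⟨Function.update a j (a j + C • b j), ?_⟩
    ext f
    have h1 : (tensP a + tensP b) f = tensP a f + tensP b f := rfl
    rw [h1]
    simp only [tensP]
    rw [← Finset.mul_prod_erase Finset.univ (fun i => a i (f i)) (Finset.mem_univ j),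
        ← Finset.mul_prod_erase Finset.univ (fun i => b i (f i)) (Finset.mem_univ j),
        ← Finset.mul_prod_erase Finset.univ (fun i => Function.update a j (a j + C • b j) i (f i)) (Finset.mem_univ j)]
    have h2 : ∀ i ∈ Finset.univ.erase j,
        Function.update a j (a j + C • b j) i (f i) = a i (f i) := by
      intro i hi
      rw [Function.update_of_ne (Finset.ne_of_mem_erase hi)]
    have h3 : ∀ i ∈ Finset.univ.erase j, b i (f i) = c i * a i (f i) := by
      intro i hi
      have := congrFun (congrArg WithLp.ofLp (hc i (Finset.ne_of_mem_erase hi))) (f i)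
      simpa only [PiLp.smul_apply, smul_eq_mul] using this
    rw [Finset.prod_congr rfl h2, Finset.prod_congr rfl h3, Finset.prod_mul_distrib, ← hC_def]
    have h4 : Function.update a j (a j + C • b j) j (f j) = a j (f j) + C * b j (f j) := by
      rw [Function.update_self]; rfl
    rw [h4]
    ring
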